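/- Let n = 3, f the squared Euclidean distance (fᵢ(δᵢ) = dᵢ²δᵢ²), slopes mᵢ = wᵢ/dᵢ with m₁ ≥ m₂ ≥ m₃ and m₁ > m₃, and suppose w₂ ≤ d₂·m̄₂ where m̄₂ = (m₁+m₃)/2. Then for all μ ∈ [0, μ₁] (with μ₁ the money threshold), the optimal disclosure is δ₂* = 0 and δᵢ* = v_{i,2} μ/(2dᵢ) for i = 1,3, where v_{i,2} = (mᵢ − m̄₂)/σ²_{m₂} and σ²_{m₂} is the variance of {m₁,m₃}; the resulting optimal value is R(μ) = μ²/(2σ²_{m₂}). -/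

import Mathlib

open Finset

private lemma aux_neg_of_mul_pos (x y : ℝ) (h : 0 < y * x) (hx : x < 0) : y < 0 := by
  nlinarith

private lemma aux_pos_of_mul_pos (x y : ℝ) (h : 0 < y * x) (hx : 0 < x) : 0 < y := by
  nlinarith

private lemma aux_final (t μ a0 a1 a2 : ℝ) (htpos : 0 < t) (hμ0 : 0 ≤ μ)
    (hge : μ ≤ t * (a0 - a2)) :
    μ ^ 2 ≤ (a0 ^ 2 + a1 ^ 2 + a2 ^ 2) * (2 * t ^ 2) := by
  have h1 : μ ^ 2 ≤ (t * (a0 - a2)) ^ 2 := by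
    have := mul_self_le_mul_self hμ0 hge
    nlinarith
  nlinarith [sq_nonneg (a0 + a2), sq_nonneg a1, sq_nonneg t]

theorem n3_sed_solution_two_active
    (p q w : Fin 3 → ℝ)
    (hp : ∀ i, 0 < p i) (hq : ∀ i, 0 < q i)
    (hps : ∑ i, p i = 1) (hqs : ∑ i, q i = 1)
    (hpq : ∀ i, p i ≠ q i) (hw : ∀ i, 0 < w i)
    (d m : Fin 3 → ℝ) (hd : ∀ i, d i = q i - p i)
    (hm : ∀ i, m i = w i / d i)
    (hord : m 0 ≥ m 1 ∧ m 1 ≥ m 2) (hord13 : m 0 > m 2)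
    (mbar s2 μ₁ : ℝ)
    (hmbar : mbar = (m 0 + m 2) / 2)
    (hs2 : s2 = ((m 0 - mbar) ^ 2 + (m 2 - mbar) ^ 2) / 2)
    (hcond : w 1 ≤ d 1 * mbar)
    (hμ₁ : μ₁ = min (2 * d 0 * s2 / (m 0 - mbar)) (2 * d 2 * s2 / (m 2 - mbar)))
    (μ : ℝ) (hμ : μ ∈ Set.Icc 0 μ₁)
    (δstar : Fin 3 → ℝ)
    (hδstar : δstar = fun i => if i = 1 then 0 else (m i - mbar) / s2 * μ / (2 * d i)) :
    ((∀ i, δstar i ∈ Set.Icc (0:ℝ) 1) ∧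
      ∑ i, d i * δstar i = 0 ∧ ∑ i, w i * δstar i = μ) ∧
    (∀ η : Fin 3 → ℝ,
      (∀ i, η i ∈ Set.Icc (0:ℝ) 1) → ∑ i, d i * η i = 0 → ∑ i, w i * η i = μ →
      ∑ i, (d i) ^ 2 * (δstar i) ^ 2 ≤ ∑ i, (d i) ^ 2 * (η i) ^ 2) ∧
    ∑ i, (d i) ^ 2 * (δstar i) ^ 2 = μ ^ 2 / (2 * s2) := by
  obtain ⟨hμ0, hμle⟩ := hμ
  have hdne : ∀ i, d i ≠ 0 := fun i => by
    rw [hd i]; exact sub_ne_zero.mpr fun h => hpq i h.symm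
  have hw' : ∀ i, w i = m i * d i := fun i => by
    rw [hm i, div_mul_cancel₀ _ (hdne i)]
  have hdsum : d 0 + d 1 + d 2 = 0 := by
    simp only [Fin.sum_univ_three] at hps hqs
    rw [hd 0, hd 1, hd 2]; linarith
  -- t = half gap
  obtain ⟨t, ht⟩ : ∃ t : ℝ, t = (m 0 - m 2) / 2 := ⟨_, rfl⟩
  have htpos : 0 < t := by rw [ht]; linarith
  have hmbar0 : m 0 - mbar = t := by rw [hmbar, ht]; ring
  have hmbar2 : m 2 - mbar = -t := by rw [hmbar, ht]; ring
  have hs2t : s2 = t ^ 2 := by rw [hs2, hmbar0, hmbar2]; ring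
  have hs2pos : 0 < s2 := by rw [hs2t]; positivity
  -- signs of d0 d2
  have hd0pos : 0 < d 0 := by
    rcases lt_or_gt_of_ne (hdne 0) with h0 | h0
    · exfalso
      have hm0 : m 0 < 0 := aux_neg_of_mul_pos _ _ ((hw' 0) ▸ hw 0) h0
      have hm1 : m 1 < 0 := lt_of_le_of_lt hord.1 hm0
      have hm2 : m 2 < 0 := lt_of_le_of_lt hord.2 hm1
      have hd1 : d 1 < 0 := by
        rcases lt_or_gt_of_ne (hdne 1) with h | h
        · exact h
        · linarith [aux_pos_of_mul_pos _ _ ((hw' 1) ▸ hw 1) h]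
      have hd2 : d 2 < 0 := by
        rcases lt_or_gt_of_ne (hdne 2) with h | h
        · exact h
        · linarith [aux_pos_of_mul_pos _ _ ((hw' 2) ▸ hw 2) h]
      linarith
    · exact h0
  have hd2neg : d 2 < 0 := by
    rcases lt_or_gt_of_ne (hdne 2) with h2 | h2
    · exact h2
    · exfalso
      have hm2 : 0 < m 2 := aux_pos_of_mul_pos _ _ ((hw' 2) ▸ hw 2) h2
      have hm1 : 0 < m 1 := lt_of_lt_of_le hm2 hord.2
      have hm0 : 0 < m 0 := lt_of_lt_of_le hm1 hord.1
      have hd1 : 0 < d 1 := by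
        rcases lt_or_gt_of_ne (hdne 1) with h | h
        · linarith [aux_neg_of_mul_pos _ _ ((hw' 1) ▸ hw 1) h]
        · exact h
      linarith
  have hd0ne' := hdne 0
  have hd2ne' := hdne 2
  have htne' : t ≠ 0 := ne_of_gt htpos
  -- bounds on μ
  have hb0 : 2 * d 0 * s2 / (m 0 - mbar) = 2 * d 0 * t := by
    rw [hmbar0, hs2t]; field_simp
  have hb2 : 2 * d 2 * s2 / (m 2 - mbar) = -(2 * d 2 * t) := by
    rw [hmbar2, hs2t, div_neg, neg_inj]; field_simp
  rw [hμ₁, hb0, hb2] at hμle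
  have hμ0b : μ ≤ 2 * d 0 * t := le_trans hμle (min_le_left _ _)
  have hμ2b : μ ≤ -(2 * d 2 * t) := le_trans hμle (min_le_right _ _)
  -- δstar values
  have hδ0 : δstar 0 = μ / (2 * t * d 0) := by
    have h := congrFun hδstar 0
    rw [if_neg (by decide : ¬(0:Fin 3) = 1)] at h
    rw [h, hmbar0, hs2t]
    field_simp
  have hδ1 : δstar 1 = 0 := by
    have h := congrFun hδstar 1
    rwa [if_pos rfl] at h
  have hδ2 : δstar 2 = -(μ / (2 * t * d 2)) := by
    have h := congrFun hδstar 2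
    rw [if_neg (by decide : ¬(2:Fin 3) = 1)] at h
    rw [h, hmbar2, hs2t]
    field_simp
  have h0mem : δstar 0 ∈ Set.Icc (0:ℝ) 1 := by
    rw [hδ0]
    constructor
    · exact div_nonneg hμ0 (mul_pos (mul_pos two_pos htpos) hd0pos).le
    · rw [div_le_one (mul_pos (mul_pos two_pos htpos) hd0pos)]; linarith
  have h1mem : δstar 1 ∈ Set.Icc (0:ℝ) 1 := by
    rw [hδ1]; exact ⟨le_refl 0, zero_le_one⟩
  have h2mem : δstar 2 ∈ Set.Icc (0:ℝ) 1 := by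
    rw [hδ2]
    have h2 : 0 < 2 * t * -d 2 := mul_pos (mul_pos two_pos htpos) (neg_pos.mpr hd2neg)
    have heq : -(μ / (2 * t * d 2)) = μ / (2 * t * -d 2) := by
      rw [mul_neg, div_neg]
    rw [heq]
    constructor
    · exact div_nonneg hμ0 (le_of_lt h2)
    · rw [div_le_one h2]; linarith
  refine ⟨⟨?_, ?_, ?_⟩, ?_, ?_⟩
  · intro i
    fin_cases i
    exacts [h0mem, h1mem, h2mem]
  · simp only [Fin.sum_univ_three, hδ0, hδ1, hδ2]
    field_simp
    ring
  · simp only [Fin.sum_univ_three, hδ0, hδ1, hδ2, hw' 0, hw' 2]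
    rw [show m 0 = mbar + t by linarith, show m 2 = mbar - t by linarith]
    field_simp
    ring
  · intro η hηb hηd hηw
    simp only [Fin.sum_univ_three] at hηd hηw ⊢
    rw [hw' 0, hw' 1, hw' 2] at hηw
    set a0 := d 0 * η 0 with ha0def
    set a1 := d 1 * η 1 with ha1def
    set a2 := d 2 * η 2 with ha2def
    have hηw' : m 0 * a0 + m 1 * a1 + m 2 * a2 = μ := by
      rw [ha0def, ha1def, ha2def]; linarith [hηw]
    have ha1 : a1 = -(a0 + a2) := by
      rw [ha0def, ha1def, ha2def]; linarith [hηd]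
    have hkey : t * (a0 - a2) = μ + (mbar - m 1) * a1 := by
      have h0 : m 0 = mbar + t := by linarith
      have h2 : m 2 = mbar - t := by linarith
      rw [h0, h2] at hηw'
      linear_combination hηw' - mbar * ha1
    have hsgn : 0 ≤ (mbar - m 1) * a1 := by
      have h1 : 0 ≤ d 1 * (mbar - m 1) := by linarith [hw' 1, hcond]
      have h2 := mul_nonneg h1 (hηb 1).1
      rw [ha1def]
      linarith [h2]
    have hge : μ ≤ t * (a0 - a2) := by linarith
    have hlhs : d 0 ^ 2 * δstar 0 ^ 2 + d 1 ^ 2 * δstar 1 ^ 2 + d 2 ^ 2 * δstar 2 ^ 2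
        = μ ^ 2 / (2 * t ^ 2) := by
      rw [hδ0, hδ1, hδ2]
      field_simp
      ring
    rw [hlhs]
    rw [div_le_iff₀ (mul_pos two_pos (pow_pos htpos 2))]
    have e0 : d 0 ^ 2 * η 0 ^ 2 = a0 ^ 2 := by rw [ha0def]; ring
    have e1 : d 1 ^ 2 * η 1 ^ 2 = a1 ^ 2 := by rw [ha1def]; ring
    have e2 : d 2 ^ 2 * η 2 ^ 2 = a2 ^ 2 := by rw [ha2def]; ring
    rw [e0, e1, e2]
    exact aux_final t μ a0 a1 a2 htpos hμ0 hge
  · simp only [Fin.sum_univ_three, hδ0, hδ1, hδ2, hs2t]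
    field_simp
    ring
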